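/- Let k be a nonnegative integer and \ell a positive integer with k \le \ell. Every integer c satisfying \ell \le c \le (\ell - k + 1)\,2^k - 1 can be written as a sum c = 2^{k_1} + 2^{k_2} + ... + 2^{k_\ell} where each k_j \in \{0, 1, ..., k\} and at least one k_j equals 0. -/

import Mathlib

theorem stmt_4_aux : ∀ n k ℓ c : ℕ, k + ℓ ≤ n → 0 < ℓ → k ≤ ℓ → ℓ ≤ c →
    c + 1 ≤ (ℓ - k + 1) * 2 ^ k →
    ∃ f : Fin ℓ → ℕ, (∀ j, f j ≤ k) ∧ (∃ j, f j = 0) ∧ ∑ j, 2 ^ f j = c := by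
  intro n
  induction n with
  | zero => intro k ℓ c h h1 _ _ _; omega
  | succ n ih =>
    intro k ℓ c hn hℓ hkℓ hc1 hc2
    match k, hkℓ, hc2 with
    | 0, hkℓ, hc2 =>
      have hcℓ : c = ℓ := by simp at hc2; omega
      refine ⟨fun _ => 0, fun _ => le_refl _, ⟨⟨0, hℓ⟩, rfl⟩, ?_⟩
      simp [hcℓ]
    | k+1, hkℓ, hc2 =>
      have hp : k + 1 ≤ 2 ^ k := Nat.lt_two_pow_self (n := k)
      by_cases h : 2 ^ (k+1) + ℓ ≤ c + 1
      · -- peel off a 2^(k+1)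
        have hlt : k + 1 < ℓ := by
          rcases Nat.lt_or_ge (k+1) ℓ with h' | h'
          · exact h'
          · exfalso
            have : ℓ = k + 1 := le_antisymm (by omega) hkℓ
            subst this
            simp [pow_succ] at hc2
            omega
        obtain ⟨ℓ', rfl⟩ : ∃ ℓ', ℓ = ℓ' + 1 := ⟨ℓ - 1, by omega⟩
        -- bound for recursive call
        obtain ⟨m, hm⟩ : ∃ m, ℓ' + 1 - (k+1) = m + 1 := ⟨ℓ' - (k+1), by omega⟩
        have hmul : (ℓ' + 1 - (k+1) + 1) * 2 ^ (k+1)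
            = (ℓ' - (k+1) + 1) * 2 ^ (k+1) + 2 ^ (k+1) := by
          rw [hm]
          have : ℓ' - (k+1) = m := by omega
          rw [this]; ring
        obtain ⟨f', h1, ⟨j0, hj0⟩, h3⟩ := ih (k+1) ℓ' (c - 2 ^ (k+1))
          (by omega) (by omega) (by omega) (by omega) (by omega)
        refine ⟨Fin.cons (k+1) f', ?_, ⟨j0.succ, by simp [hj0]⟩, ?_⟩
        · intro j
          refine Fin.cases ?_ ?_ j
          · simp
          · intro i; simpa using h1 i
        · have : ∑ j : Fin (ℓ' + 1), 2 ^ (Fin.cons (k+1) f' : Fin (ℓ'+1) → ℕ) j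
              = 2 ^ (k+1) + ∑ j : Fin ℓ', 2 ^ f' j := by
            rw [Fin.sum_univ_succ]; simp
          rw [this, h3]
          omega
      · -- lower k by one
        have hbound : c + 1 ≤ (ℓ - k + 1) * 2 ^ k := by
          rcases Nat.lt_or_ge (k+1) ℓ with h' | h'
          · -- ℓ ≥ k + 2
            obtain ⟨d, hd⟩ : ∃ d, ℓ = k + 2 + d := ⟨ℓ - (k+2), by omega⟩
            subst hd
            have e1 : (k + 2 + d - (k+1) + 1) * 2 ^ (k+1) = (d+2) * (2 * 2 ^ k) := by
              have : k + 2 + d - (k+1) + 1 = d + 2 := by omega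
              rw [this, pow_succ]; ring
            have e2 : (k + 2 + d - k + 1) * 2 ^ k = (d+3) * 2 ^ k := by
              have : k + 2 + d - k + 1 = d + 3 := by omega
              rw [this]
            rw [e2]
            have key : k + 1 + d ≤ (d+1) * 2 ^ k := by
              calc k + 1 + d ≤ (d+1) * (k+1) := by nlinarith
                _ ≤ (d+1) * 2 ^ k := Nat.mul_le_mul_left _ hp
            have e3 : (d+3) * 2 ^ k = (d+1) * 2 ^ k + 2 * 2 ^ k := by ring
            rw [e3]
            omega
          · -- ℓ = k + 1
            have hℓk : ℓ = k + 1 := le_antisymm h' hkℓ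
            subst hℓk
            have e1 : (k + 1 - (k+1) + 1) * 2 ^ (k+1) = 2 * 2 ^ k := by
              simp [pow_succ]; ring
            have e2 : (k + 1 - k + 1) * 2 ^ k = 2 * 2 ^ k := by
              have : k + 1 - k + 1 = 2 := by omega
              rw [this]
            rw [e1] at hc2
            omega
        obtain ⟨f, h1, h2, h3⟩ := ih k ℓ c (by omega) hℓ (by omega) hc1 hbound
        exact ⟨f, fun j => le_trans (h1 j) (Nat.le_succ k), h2, h3⟩

theorem stmt_4 (k ℓ c : ℕ) (hℓ : 0 < ℓ) (hkℓ : k ≤ ℓ)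
    (hc1 : ℓ ≤ c) (hc2 : (c : ℤ) ≤ ((ℓ : ℤ) - k + 1) * 2 ^ k - 1) :
    ∃ f : Fin ℓ → ℕ, (∀ j, f j ≤ k) ∧ (∃ j, f j = 0) ∧ ∑ j, 2 ^ f j = c := by
  have hcast : ((((ℓ - k + 1) * 2 ^ k : ℕ)) : ℤ) = ((ℓ : ℤ) - k + 1) * 2 ^ k := by
    push_cast [Nat.cast_sub hkℓ]
    ring
  have hnat : c + 1 ≤ (ℓ - k + 1) * 2 ^ k := by
    have h2 : (c : ℤ) ≤ (((ℓ - k + 1) * 2 ^ k : ℕ) : ℤ) - 1 := by rw [hcast]; exact hc2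
    have h3 : (c : ℤ) + 1 ≤ (((ℓ - k + 1) * 2 ^ k : ℕ) : ℤ) := by omega
    exact_mod_cast h3
  exact stmt_4_aux (k + ℓ) k ℓ c le_rfl hℓ hkℓ hc1 hnat
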